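/- Let f : Ω → ℂ be a nonvanishing scalar C¹ function on an open set Ω ⊆ ℝ³. If W = W₀ + 𝐖 : Ω → ℍ(ℂ) is a C¹ solution of the main Vekua equation VW = 0 and 𝚽 = f𝐖, then D𝚽 = −(f/2)·V̄W; equivalently, div 𝚽 = 0 and rot 𝚽 = −(f/2)·Ẇ, where Ẇ = V̄W. -/

import Mathlib

open Quaternion

noncomputable section

/-- Points of ℝ³. -/
abbrev P3 := EuclideanSpace ℝ (Fin 3)

/-- Partial derivative ∂ₖ of a complex-valued function on ℝ³. -/
def pd (k : Fin 3) (F : P3 → ℂ) : P3 → ℂ :=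
  fun p => fderiv ℝ F p (EuclideanSpace.single k 1)

/-- The Laplacian Δ = ∂₁² + ∂₂² + ∂₃². -/
def lap3 (F : P3 → ℂ) : P3 → ℂ := fun p => ∑ k : Fin 3, pd k (pd k F) p

/-- Embedding of a complex scalar as a quaternion. -/
def qC (z : ℂ) : ℍ[ℂ] := ⟨z, 0, 0, 0⟩

/-- The quaternionic imaginary units e₁, e₂, e₃. -/
def qe : Fin 3 → ℍ[ℂ] := ![⟨0,1,0,0⟩, ⟨0,0,1,0⟩, ⟨0,0,0,1⟩]

/-- The eₖ-components of a quaternion. -/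
def qcomp : Fin 3 → ℍ[ℂ] → ℂ := ![QuaternionAlgebra.imI, QuaternionAlgebra.imJ, QuaternionAlgebra.imK]

/-- Quaternionic conjugation C_H. -/
def CH (q : ℍ[ℂ]) : ℍ[ℂ] := ⟨q.re, -q.imI, -q.imJ, -q.imK⟩

/-- Componentwise partial derivative of a quaternion-valued function. -/
def pdq (k : Fin 3) (W : P3 → ℍ[ℂ]) : P3 → ℍ[ℂ] :=
  fun p => ⟨pd k (fun x => (W x).re) p, pd k (fun x => (W x).imI) p,
            pd k (fun x => (W x).imJ) p, pd k (fun x => (W x).imK) p⟩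

/-- The Dirac (Moisil–Theodorescu) operator D Q = Σₖ eₖ ∂ₖ Q. -/
def Dq (W : P3 → ℍ[ℂ]) : P3 → ℍ[ℂ] := fun p => ∑ k : Fin 3, qe k * pdq k W p

/-- The right Dirac operator Dᵣ Q = Σₖ (∂ₖ Q) eₖ. -/
def Drq (W : P3 → ℍ[ℂ]) : P3 → ℍ[ℂ] := fun p => ∑ k : Fin 3, pdq k W p * qe k

/-- Gradient of a scalar function viewed as a purely vectorial quaternion. -/
def gradq (F : P3 → ℂ) : P3 → ℍ[ℂ] := fun p => ⟨0, pd 0 F p, pd 1 F p, pd 2 F p⟩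

/-- Divergence of (the vector part of) a quaternion-valued function. -/
def divq (W : P3 → ℍ[ℂ]) : P3 → ℂ :=
  fun p => pd 0 (fun x => (W x).imI) p + pd 1 (fun x => (W x).imJ) p + pd 2 (fun x => (W x).imK) p

/-- Rotor (curl) of (the vector part of) a quaternion-valued function. -/
def rotq (W : P3 → ℍ[ℂ]) : P3 → ℍ[ℂ] :=
  fun p => ⟨0,
    pd 1 (fun x => (W x).imK) p - pd 2 (fun x => (W x).imJ) p,
    pd 2 (fun x => (W x).imI) p - pd 0 (fun x => (W x).imK) p,
    pd 0 (fun x => (W x).imJ) p - pd 1 (fun x => (W x).imI) p⟩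

/-- Cross product of the vector parts of two quaternions. -/
def crossq (u v : ℍ[ℂ]) : ℍ[ℂ] :=
  ⟨0, u.imJ * v.imK - u.imK * v.imJ, u.imK * v.imI - u.imI * v.imK, u.imI * v.imJ - u.imJ * v.imI⟩

/-- Bilinear scalar product of the vector parts of two quaternions. -/
def dotq (u v : ℍ[ℂ]) : ℂ := u.imI * v.imI + u.imJ * v.imJ + u.imK * v.imK

/-- `Cⁿ` smoothness of a quaternion-valued function on a set, componentwise. -/
def QContDiffOn (n : ℕ) (W : P3 → ℍ[ℂ]) (Ω : Set P3) : Prop :=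
  ContDiffOn ℝ n (fun p => (W p).re) Ω ∧ ContDiffOn ℝ n (fun p => (W p).imI) Ω ∧
  ContDiffOn ℝ n (fun p => (W p).imJ) Ω ∧ ContDiffOn ℝ n (fun p => (W p).imK) Ω

/-- The pure-quaternion Df/f built from a nonvanishing scalar function f. -/
def DfF (f : P3 → ℂ) : P3 → ℍ[ℂ] := fun p => (f p)⁻¹ • gradq f p

lemma pd_zero (k : Fin 3) (p : P3) : pd k (fun _ => (0:ℂ)) p = 0 := by
  simp [pd]

lemma pd_mul (k : Fin 3) {f g : P3 → ℂ} {p : P3}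
    (hf : DifferentiableAt ℝ f p) (hg : DifferentiableAt ℝ g p) :
    pd k (fun x => f x * g x) p = f p * pd k g p + g p * pd k f p := by
  unfold pd
  rw [fderiv_fun_mul hf hg]
  simp [smul_eq_mul]

lemma qe_comp :
    (qe 0).re = 0 ∧ (qe 0).imI = 1 ∧ (qe 0).imJ = 0 ∧ (qe 0).imK = 0 ∧
    (qe 1).re = 0 ∧ (qe 1).imI = 0 ∧ (qe 1).imJ = 1 ∧ (qe 1).imK = 0 ∧
    (qe 2).re = 0 ∧ (qe 2).imI = 0 ∧ (qe 2).imJ = 0 ∧ (qe 2).imK = 1 := by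
  refine ⟨rfl, rfl, rfl, rfl, rfl, rfl, rfl, rfl, rfl, rfl, rfl, rfl⟩

lemma pdq_comp (k : Fin 3) (W : P3 → ℍ[ℂ]) (p : P3) :
    (pdq k W p).re = pd k (fun x => (W x).re) p ∧ (pdq k W p).imI = pd k (fun x => (W x).imI) p ∧
    (pdq k W p).imJ = pd k (fun x => (W x).imJ) p ∧ (pdq k W p).imK = pd k (fun x => (W x).imK) p :=
  ⟨rfl, rfl, rfl, rfl⟩

lemma gradq_comp (F : P3 → ℂ) (p : P3) :
    (gradq F p).re = 0 ∧ (gradq F p).imI = pd 0 F p ∧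
    (gradq F p).imJ = pd 1 F p ∧ (gradq F p).imK = pd 2 F p :=
  ⟨rfl, rfl, rfl, rfl⟩

lemma CH_comp (q : ℍ[ℂ]) :
    (CH q).re = q.re ∧ (CH q).imI = -q.imI ∧ (CH q).imJ = -q.imJ ∧ (CH q).imK = -q.imK :=
  ⟨rfl, rfl, rfl, rfl⟩

lemma rotq_comp (W : P3 → ℍ[ℂ]) (p : P3) :
    (rotq W p).re = 0 ∧
    (rotq W p).imI = pd 1 (fun x => (W x).imK) p - pd 2 (fun x => (W x).imJ) p ∧
    (rotq W p).imJ = pd 2 (fun x => (W x).imI) p - pd 0 (fun x => (W x).imK) p ∧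
    (rotq W p).imK = pd 0 (fun x => (W x).imJ) p - pd 1 (fun x => (W x).imI) p :=
  ⟨rfl, rfl, rfl, rfl⟩

/-- for a solution W = W₀ + 𝐖 of VW = 0 and 𝚽 = f𝐖 one has
    D𝚽 = −(f/2)·V̄W, equivalently div 𝚽 = 0 and rot 𝚽 = −(f/2)·Ẇ. -/
theorem statement12 (Ω : Set P3) (hΩ : IsOpen Ω)
    (f : P3 → ℂ) (hf : ContDiffOn ℝ 1 f Ω) (hf0 : ∀ p ∈ Ω, f p ≠ 0)
    (W : P3 → ℍ[ℂ]) (hW : QContDiffOn 1 W Ω)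
    (hVek : ∀ p ∈ Ω, Dq W p - DfF f p * CH (W p) = 0)
    (Φ : P3 → ℍ[ℂ]) (hΦ : Φ = fun x => f x • Quaternion.im (W x)) :
    ∀ p ∈ Ω,
      (Dq Φ p = (-(f p / 2)) • (Drq W p - CH (W p) * DfF f p)) ∧
      (divq Φ p = 0) ∧
      (rotq Φ p = (-(f p / 2)) • (Drq W p - CH (W p) * DfF f p)) := by
  subst hΦ
  intro p hp
  have hmem : Ω ∈ nhds p := hΩ.mem_nhds hp
  have hfd : DifferentiableAt ℝ f p := (hf.differentiableOn one_ne_zero).differentiableAt hmem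
  obtain ⟨h0, h1, h2, h3⟩ := hW
  have hw0 : DifferentiableAt ℝ (fun x => (W x).re) p := (h0.differentiableOn one_ne_zero).differentiableAt hmem
  have hw1 : DifferentiableAt ℝ (fun x => (W x).imI) p := (h1.differentiableOn one_ne_zero).differentiableAt hmem
  have hw2 : DifferentiableAt ℝ (fun x => (W x).imJ) p := (h2.differentiableOn one_ne_zero).differentiableAt hmem
  have hw3 : DifferentiableAt ℝ (fun x => (W x).imK) p := (h3.differentiableOn one_ne_zero).differentiableAt hmem
  have hfp := hf0 p hp
  have hv := hVek p hp
  rw [sub_eq_zero] at hv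
  have hv' := congrArg (fun q => f p • q) hv
  simp only [smul_smul, DfF, smul_mul_assoc, smul_inv_smul₀ hfp] at hv'
  rw [Quaternion.ext_iff] at hv'
  simp only [Dq, gradq_comp, CH_comp, pdq_comp, qe_comp, Fin.sum_univ_three, Matrix.cons_val_zero,
    Matrix.cons_val_one, Matrix.head_cons, Matrix.cons_val_two, Matrix.tail_cons,
    Quaternion.re_mul, Quaternion.imI_mul, Quaternion.imJ_mul, Quaternion.imK_mul,
    Quaternion.re_smul, Quaternion.imI_smul, Quaternion.imJ_smul, Quaternion.imK_smul,
    Quaternion.re_add, Quaternion.imI_add, Quaternion.imJ_add, Quaternion.imK_add,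
    smul_eq_mul] at hv'
  obtain ⟨hv0, hv1, hv2, hv3⟩ := hv'
  ring_nf at hv0 hv1 hv2 hv3
  simp only [mul_inv_cancel₀ hfp, one_mul] at hv0 hv1 hv2 hv3
  have eimI0 : pd 0 (fun x => f x * (W x).imI) p = f p * pd 0 (fun x => (W x).imI) p + (W p).imI * pd 0 f p := pd_mul 0 hfd hw1
  have eimI1 : pd 1 (fun x => f x * (W x).imI) p = f p * pd 1 (fun x => (W x).imI) p + (W p).imI * pd 1 f p := pd_mul 1 hfd hw1
  have eimI2 : pd 2 (fun x => f x * (W x).imI) p = f p * pd 2 (fun x => (W x).imI) p + (W p).imI * pd 2 f p := pd_mul 2 hfd hw1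
  have eimJ0 : pd 0 (fun x => f x * (W x).imJ) p = f p * pd 0 (fun x => (W x).imJ) p + (W p).imJ * pd 0 f p := pd_mul 0 hfd hw2
  have eimJ1 : pd 1 (fun x => f x * (W x).imJ) p = f p * pd 1 (fun x => (W x).imJ) p + (W p).imJ * pd 1 f p := pd_mul 1 hfd hw2
  have eimJ2 : pd 2 (fun x => f x * (W x).imJ) p = f p * pd 2 (fun x => (W x).imJ) p + (W p).imJ * pd 2 f p := pd_mul 2 hfd hw2
  have eimK0 : pd 0 (fun x => f x * (W x).imK) p = f p * pd 0 (fun x => (W x).imK) p + (W p).imK * pd 0 f p := pd_mul 0 hfd hw3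
  have eimK1 : pd 1 (fun x => f x * (W x).imK) p = f p * pd 1 (fun x => (W x).imK) p + (W p).imK * pd 1 f p := pd_mul 1 hfd hw3
  have eimK2 : pd 2 (fun x => f x * (W x).imK) p = f p * pd 2 (fun x => (W x).imK) p + (W p).imK * pd 2 f p := pd_mul 2 hfd hw3

  refine ⟨?_, ?_, ?_⟩
  case _ =>
    rw [Quaternion.ext_iff]
    simp only [Dq, Drq, DfF, CH_comp, gradq_comp, pdq_comp, qe_comp, Fin.sum_univ_three, Matrix.cons_val_zero,
      Matrix.cons_val_one, Matrix.head_cons, Matrix.cons_val_two, Matrix.tail_cons,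
      Quaternion.re_mul, Quaternion.imI_mul, Quaternion.imJ_mul, Quaternion.imK_mul,
      Quaternion.re_smul, Quaternion.imI_smul, Quaternion.imJ_smul, Quaternion.imK_smul,
      Quaternion.re_add, Quaternion.imI_add, Quaternion.imJ_add, Quaternion.imK_add,
      Quaternion.re_sub, Quaternion.imI_sub, Quaternion.imJ_sub, Quaternion.imK_sub,
      Quaternion.re_im, Quaternion.imI_im, Quaternion.imJ_im, Quaternion.imK_im,
      smul_eq_mul, smul_zero, mul_zero, pd_zero, eimI0, eimI1, eimI2, eimJ0, eimJ1, eimJ2,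
      eimK0, eimK1, eimK2]
    refine ⟨?_, ?_, ?_, ?_⟩ <;> field_simp
    · linear_combination 3 * hv0
    · linear_combination hv1
    · linear_combination hv2
    · linear_combination hv3
  case _ =>
    simp only [divq, Quaternion.imI_smul, Quaternion.imJ_smul, Quaternion.imK_smul,
      Quaternion.imI_im, Quaternion.imJ_im, Quaternion.imK_im, smul_eq_mul,
      eimI0, eimJ1, eimK2]
    linear_combination -hv0
  case _ =>
    rw [Quaternion.ext_iff]
    simp only [rotq_comp, Drq, DfF, CH_comp, gradq_comp, pdq_comp, qe_comp, Fin.sum_univ_three, Matrix.cons_val_zero,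
      Matrix.cons_val_one, Matrix.head_cons, Matrix.cons_val_two, Matrix.tail_cons,
      Quaternion.re_mul, Quaternion.imI_mul, Quaternion.imJ_mul, Quaternion.imK_mul,
      Quaternion.re_smul, Quaternion.imI_smul, Quaternion.imJ_smul, Quaternion.imK_smul,
      Quaternion.re_add, Quaternion.imI_add, Quaternion.imJ_add, Quaternion.imK_add,
      Quaternion.re_sub, Quaternion.imI_sub, Quaternion.imJ_sub, Quaternion.imK_sub,
      Quaternion.re_im, Quaternion.imI_im, Quaternion.imJ_im, Quaternion.imK_im,
      smul_eq_mul, smul_zero, mul_zero, pd_zero, eimI0, eimI1, eimI2, eimJ0, eimJ1, eimJ2,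
      eimK0, eimK1, eimK2]
    refine ⟨?_, ?_, ?_, ?_⟩ <;> field_simp
    · linear_combination hv0
    · linear_combination hv1
    · linear_combination hv2
    · linear_combination hv3
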